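/- For every integer m ≥ 2 there exist real numbers d and c_1, c_2, …, c_m with |d| ≤ 8 and |c_k| ≤ 4/|k² − 2| for k = 1, 2, …, m, such that the polynomial H_m(x) = 1 + d·x² + Σ_{k=1}^m c_k·x^{k²} (of degree at most m²) is divisible by (x−1)^{m+1}. -/

import Mathlib

open Polynomial

namespace Stmt19aux

open Finset

section NatPart
open Nat

lemma IccIco (a b : ℕ) : Icc a b = Ico a (b+1) := by ext x; simp [Nat.lt_succ_iff]

lemma nat_sq_sub_sq {j k : ℕ} (h : j ≤ k) : k^2 - j^2 = (k - j) * (k + j) := by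
  have h2 : j^2 ≤ k^2 := Nat.pow_le_pow_left h 2
  zify [h, h2]; ring

lemma myE2 {k : ℕ} (hk : 1 ≤ k) : (∏ j ∈ Icc 1 (k-1), (k - j)) = (k-1)! := by
  rw [show Icc 1 (k-1) = Ico 1 k from by rw [IccIco]; congr 1; omega,
    Finset.prod_Ico_eq_prod_range, show k - 1 = k-1 from rfl,
    ← Finset.prod_range_add_one_eq_factorial (k-1), ← Finset.prod_range_reflect]
  refine Finset.prod_congr rfl fun i hi => ?_
  simp only [Finset.mem_range] at hi
  omega

lemma myE3 {k : ℕ} (hk : 1 ≤ k) : k ! * ∏ j ∈ Icc 1 (k-1), (k + j) = (2*k-1)! := by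
  have h1 : (∏ j ∈ Icc 1 (k-1), (k + j)) = ∏ i ∈ Ico (k+1) (2*k), i := by
    rw [show Icc 1 (k-1) = Ico 1 k from by rw [IccIco]; congr 1; omega,
      Finset.prod_Ico_eq_prod_range, Finset.prod_Ico_eq_prod_range,
      show k - 1 = 2*k - (k+1) from by omega]
    exact Finset.prod_congr rfl fun i hi => by omega
  have h2 : k ! = ∏ i ∈ Ico 1 (k+1), i := (Finset.prod_Ico_id_eq_factorial k).symm
  rw [h1, h2, Finset.prod_Ico_consecutive _ (by omega) (by omega),
    ← Finset.prod_Ico_id_eq_factorial (2*k-1)]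
  congr 1

lemma myE4 {m k : ℕ} (hkm : k ≤ m) : (∏ j ∈ Icc (k+1) m, (j - k)) = (m-k)! := by
  rw [IccIco, Finset.prod_Ico_eq_prod_range, show m + 1 - (k+1) = m - k from by omega,
    ← Finset.prod_range_add_one_eq_factorial (m-k)]
  exact Finset.prod_congr rfl fun i hi => by omega

lemma myE5 {m k : ℕ} (hkm : k ≤ m) : (2*k)! * ∏ j ∈ Icc (k+1) m, (j + k) = (m+k)! := by
  have h1 : (∏ j ∈ Icc (k+1) m, (j + k)) = ∏ i ∈ Ico (2*k+1) (m+k+1), i := by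
    rw [IccIco, Finset.prod_Ico_eq_prod_range, Finset.prod_Ico_eq_prod_range,
      show m + 1 - (k+1) = m+k+1 - (2*k+1) from by omega]
    exact Finset.prod_congr rfl fun i hi => by omega
  have h2 : (2*k)! = ∏ i ∈ Ico 1 (2*k+1), i := (Finset.prod_Ico_id_eq_factorial (2*k)).symm
  rw [h1, h2, Finset.prod_Ico_consecutive _ (by omega) (by omega),
    ← Finset.prod_Ico_id_eq_factorial (m+k)]

lemma sqfact {m k : ℕ} (hk : k ≤ m) : (m !)^2 ≤ (m-k)! * (m+k)! := by
  have h1 : m.choose k * k ! * (m-k)! = m ! := Nat.choose_mul_factorial_mul_factorial hk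
  have h2 : (m+k).choose k * k ! * m ! = (m+k)! := by
    have := Nat.choose_mul_factorial_mul_factorial (Nat.le_add_left k m)
    simpa using this
  have h3 : m.choose k ≤ (m+k).choose k := Nat.choose_le_choose k (Nat.le_add_right m k)
  calc (m !)^2 = (m.choose k * k ! * (m-k)!) * m ! := by rw [h1]; ring
    _ ≤ ((m+k).choose k * k ! * (m-k)!) * m ! := by
        exact Nat.mul_le_mul_right _ (Nat.mul_le_mul_right _ (Nat.mul_le_mul_right _ h3))
    _ = ((m+k).choose k * k ! * m !) * (m-k)! := by ring
    _ = (m-k)! * (m+k)! := by rw [h2]; ring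

lemma natkey {m k : ℕ} (hk1 : 1 ≤ k) (hkm : k ≤ m) :
    ((∏ j ∈ Icc 1 (k-1), j) * ∏ j ∈ Icc (k+1) m, j)^2
      ≤ 2 * ((∏ j ∈ Icc 1 (k-1), (k^2 - j^2)) * ∏ j ∈ Icc (k+1) m, (j^2 - k^2)) := by
  have e1 : (∏ j ∈ Icc 1 (k-1), (k^2-j^2))
      = (∏ j ∈ Icc 1 (k-1), (k-j)) * ∏ j ∈ Icc 1 (k-1), (k+j) := by
    rw [← Finset.prod_mul_distrib]
    exact Finset.prod_congr rfl fun j hj => by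
      rw [nat_sq_sub_sq (by simp only [mem_Icc] at hj; omega)]
  have e2 : (∏ j ∈ Icc (k+1) m, (j^2-k^2))
      = (∏ j ∈ Icc (k+1) m, (j-k)) * ∏ j ∈ Icc (k+1) m, (j+k) := by
    rw [← Finset.prod_mul_distrib]
    exact Finset.prod_congr rfl fun j hj => by
      rw [nat_sq_sub_sq (by simp only [mem_Icc] at hj; omega)]
  rw [e1, e2, myE2 hk1, myE4 hkm]
  have hab : k * ((∏ j ∈ Icc 1 (k-1), j) * ∏ j ∈ Icc (k+1) m, j) = m ! := by
    have h1 : (∏ j ∈ Icc 1 (k-1), j) = ∏ i ∈ Ico 1 k, i := by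
      rw [IccIco]; congr 1
    have h2 : (∏ i ∈ Ico k (m+1), i) = k * ∏ j ∈ Icc (k+1) m, j := by
      rw [Finset.prod_eq_prod_Ico_succ_bot (by omega : k < m+1)]
      congr 1
    calc k * ((∏ j ∈ Icc 1 (k-1), j) * ∏ j ∈ Icc (k+1) m, j)
        = (∏ i ∈ Ico 1 k, i) * (k * ∏ j ∈ Icc (k+1) m, j) := by rw [h1]; ring
      _ = (∏ i ∈ Ico 1 k, i) * ∏ i ∈ Ico k (m+1), i := by rw [h2]
      _ = ∏ i ∈ Ico 1 (m+1), i := Finset.prod_Ico_consecutive _ (by omega) (by omega)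
      _ = m ! := Finset.prod_Ico_id_eq_factorial m
  have fk : k ! = k * (k-1)! := by
    rw [show k = (k-1)+1 from by omega, Nat.factorial_succ]
    congr 1 <;> omega
  have f2k : (2*k)! = (2*k) * (2*k-1)! := by
    rw [show 2*k = (2*k-1)+1 from by omega, Nat.factorial_succ]
    congr 1 <;> omega
  have hpos : 0 < k^2 * (k ! * (2*k)!) := by positivity
  refine Nat.le_of_mul_le_mul_left ?_ hpos
  calc (k^2 * (k ! * (2*k)!)) * ((∏ j ∈ Icc 1 (k-1), j) * ∏ j ∈ Icc (k+1) m, j)^2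
      = (k ! * (2*k)!) * (k * ((∏ j ∈ Icc 1 (k-1), j) * ∏ j ∈ Icc (k+1) m, j))^2 := by ring
    _ = (k ! * (2*k)!) * (m !)^2 := by rw [hab]
    _ ≤ (k ! * (2*k)!) * ((m-k)! * (m+k)!) := Nat.mul_le_mul_left _ (sqfact hkm)
    _ = (2*k^2*((k-1)! * (2*k-1)!)) * ((m-k)! * (m+k)!) := by rw [fk, f2k]; ring
    _ = (2*k^2*((k-1)! * (k ! * ∏ j ∈ Icc 1 (k-1), (k+j))))
          * ((m-k)! * ((2*k)! * ∏ j ∈ Icc (k+1) m, (j+k))) := by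
        rw [myE3 hk1, myE5 hkm]
    _ = (k^2 * (k ! * (2*k)!)) *
          (2 * ((k-1)! * (∏ j ∈ Icc 1 (k-1), (k+j)) * ((m-k)! * ∏ j ∈ Icc (k+1) m, (j+k)))) := by
        ring

end NatPart

lemma absfac {k : ℕ} (hk : 2 ≤ k) : |(k:ℝ)^2 - 2| = (k:ℝ)^2 - 2 := by
  rw [abs_of_nonneg]
  have : (2:ℝ) ≤ (k:ℝ) := by exact_mod_cast hk
  nlinarith

lemma dprodbound : ∀ m : ℕ, 2 ≤ m →
    (∏ k ∈ Icc 1 m, ((k:ℝ)^2 / |(k:ℝ)^2 - 2|)) ≤ 8*((m:ℝ)-1)/((m:ℝ)+2) := by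
  refine Nat.le_induction ?_ ?_
  · have h2 : Icc 1 2 = ({1, 2} : Finset ℕ) := rfl
    rw [h2, Finset.prod_insert (by decide), Finset.prod_singleton]
    norm_num
  · intro m hm ih
    rw [Finset.prod_Icc_succ_top (by omega : 1 ≤ m + 1)]
    have hm2 : (2:ℝ) ≤ (m:ℝ) := by exact_mod_cast hm
    have hfac : (0:ℝ) ≤ ((m+1:ℕ):ℝ)^2 / |((m+1:ℕ):ℝ)^2 - 2| := by positivity
    have step1 := mul_le_mul_of_nonneg_right ih hfac
    refine step1.trans ?_
    rw [absfac (by omega : 2 ≤ m+1)]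
    push_cast
    rw [div_mul_div_comm, div_le_div_iff₀ (by nlinarith) (by nlinarith)]
    nlinarith [sq_nonneg ((m:ℝ)+1)]

def ee (m : ℕ) (i : ℕ) : ℕ := if i = 0 then 0 else if i = m+1 then 2 else i^2
def ss (m : ℕ) : Finset ℕ := insert 0 (insert (m+1) (Finset.Icc 1 m))
noncomputable def vv (m : ℕ) (i : ℕ) : ℝ := (ee m i : ℝ)
noncomputable def ww (m : ℕ) (i : ℕ) : ℝ := Lagrange.nodalWeight (ss m) (vv m) i

lemma hnot0 (m : ℕ) : (0:ℕ) ∉ insert (m+1) (Finset.Icc 1 m) := by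
  simp [Finset.mem_insert, Finset.mem_Icc]

lemma hnot1 (m : ℕ) : m+1 ∉ Finset.Icc 1 m := by simp

lemma card_ss (m : ℕ) : (ss m).card = m + 2 := by
  rw [ss, card_insert_of_notMem (hnot0 m), card_insert_of_notMem (hnot1 m), Nat.card_Icc]
  omega

lemma ee0 (m : ℕ) : ee m 0 = 0 := by simp [ee]
lemma ee1 (m : ℕ) : ee m (m+1) = 2 := by simp [ee]
lemma eek {m k : ℕ} (h1 : 1 ≤ k) (h2 : k ≤ m) : ee m k = k^2 := by
  rw [ee, if_neg (by omega), if_neg (by omega)]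

lemma sq_big {j : ℕ} (h : 2 ≤ j) : 4 ≤ j^2 := by nlinarith

lemma ee_injOn (m : ℕ) : Set.InjOn (vv m) (ss m) := by
  intro i hi j hj hij
  have he : ee m i = ee m j := Nat.cast_injective hij
  simp only [ss, coe_insert, Set.mem_insert_iff, mem_coe, mem_Icc] at hi hj
  have sqne0 : ∀ a : ℕ, 1 ≤ a → a ≤ m → ee m a ≠ 0 := fun a ha1 ha2 => by
    rw [eek ha1 ha2]; positivity
  have sqne2 : ∀ a : ℕ, 1 ≤ a → a ≤ m → ee m a ≠ 2 := fun a ha1 ha2 => by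
    rw [eek ha1 ha2]
    rcases Nat.lt_or_ge a 2 with h | h
    · interval_cases a <;> simp
    · have := sq_big h; omega
  rcases hi with rfl | rfl | ⟨hi1, hi2⟩ <;> rcases hj with rfl | rfl | ⟨hj1, hj2⟩
  · rfl
  · rw [ee0, ee1] at he; omega
  · exact absurd (by rw [← he, ee0]) (Ne.symm (sqne0 j hj1 hj2))
  · rw [ee0, ee1] at he; omega
  · rfl
  · exact absurd (by rw [← he, ee1]) (Ne.symm (sqne2 j hj1 hj2))
  · exact absurd (by rw [he, ee0]) (sqne0 i hi1 hi2)
  · exact absurd (by rw [he, ee1]) (sqne2 i hi1 hi2)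
  · rw [eek hi1 hi2, eek hj1 hj2] at he
    exact Nat.pow_left_injective (by norm_num) he

lemma lagrange_sum_zero {ι : Type*} [DecidableEq ι] {s : Finset ι} {v : ι → ℝ}
    (hvs : Set.InjOn v s) {f : ℝ[X]} (hf : f.degree < ((s.card - 1 : ℕ) : WithBot ℕ)) :
    ∑ i ∈ s, f.eval (v i) * Lagrange.nodalWeight s v i = 0 := by
  have hdeg : f.degree < (s.card : WithBot ℕ) :=
    hf.trans_le (by exact_mod_cast Nat.sub_le s.card 1)
  have hint := Lagrange.eq_interpolate hvs hdeg
  have h0 : f.coeff (s.card - 1) = 0 := coeff_eq_zero_of_degree_lt hf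
  have h1 : (Lagrange.interpolate s v fun i => f.eval (v i)).coeff (s.card - 1)
      = ∑ i ∈ s, f.eval (v i) * Lagrange.nodalWeight s v i := by
    rw [Lagrange.interpolate_apply, finset_sum_coeff]
    refine sum_congr rfl fun i hi => ?_
    rw [Lagrange.basis_eq_prod_sub_inv_mul_nodal_div hi,
        ← Lagrange.nodal_erase_eq_nodal_div hi, coeff_C_mul, coeff_C_mul]
    have hd : (Lagrange.nodal (s.erase i) v).natDegree = s.card - 1 := by
      rw [Lagrange.natDegree_nodal, card_erase_of_mem hi]
    rw [← hd, Lagrange.nodal_monic.coeff_natDegree]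
    ring
  rw [← h1, ← hint, h0]

lemma vanish (m : ℕ) {j : ℕ} (hj : j ≤ m) :
    ∑ i ∈ ss m, ww m i * ((ee m i).choose j : ℝ) = 0 := by
  have hdeg : (descPochhammer ℝ j).degree < (((ss m).card - 1 : ℕ) : WithBot ℕ) := by
    rw [card_ss]
    refine lt_of_le_of_lt degree_le_natDegree ?_
    rw [descPochhammer_natDegree]
    exact_mod_cast (by omega : j < m + 2 - 1)
  have h := lagrange_sum_zero (ee_injOn m) hdeg
  have heval : ∀ i, (descPochhammer ℝ j).eval (vv m i)
      = (j.factorial : ℝ) * ((ee m i).choose j : ℝ) := by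
    intro i
    rw [vv, descPochhammer_eval_eq_descFactorial]
    exact_mod_cast congrArg (Nat.cast : ℕ → ℝ)
      (Nat.descFactorial_eq_factorial_mul_choose (ee m i) j)
  have h2 : (j.factorial : ℝ) * ∑ i ∈ ss m, ww m i * ((ee m i).choose j : ℝ) = 0 := by
    rw [Finset.mul_sum, ← h]
    exact sum_congr rfl fun i _ => by rw [heval i, ww]; ring
  have hfac : (j.factorial : ℝ) ≠ 0 := by positivity
  exact (mul_eq_zero.mp h2).resolve_left hfac

lemma dvdG (m : ℕ) :
    (X - 1 : ℝ[X]) ^ (m+1) ∣ ∑ i ∈ ss m, C (ww m i) * X ^ (ee m i) := by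
  have h1 : (X - 1 : ℝ[X]) = X - C 1 := by rw [map_one]
  rw [h1, Polynomial.X_sub_C_pow_dvd_iff, Polynomial.X_pow_dvd_iff]
  intro d hd
  rw [← Polynomial.taylor_apply, Polynomial.taylor_coeff, map_sum,
    Polynomial.eval_finset_sum, ← vanish m (by omega : d ≤ m)]
  refine sum_congr rfl fun i _ => ?_
  rw [Polynomial.C_mul_X_pow_eq_monomial, Polynomial.hasseDeriv_monomial,
    Polynomial.eval_monomial, one_pow, mul_one]
  push_cast
  ring

lemma mem0 (m : ℕ) : (0:ℕ) ∈ ss m := by simp [ss]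
lemma mem1 (m : ℕ) : m+1 ∈ ss m := by simp [ss]
lemma memk {m k : ℕ} (hk : k ∈ Finset.Icc 1 m) : k ∈ ss m := by
  simp only [ss, mem_insert]; tauto

lemma Wpos (m : ℕ) {i : ℕ} (hi : i ∈ ss m) :
    0 < ∏ j ∈ (ss m).erase i, |vv m i - vv m j| := by
  refine Finset.prod_pos fun j hj => abs_pos.mpr (sub_ne_zero.mpr fun hEq => ?_)
  exact (Finset.mem_erase.mp hj).1
    ((ee_injOn m (Finset.mem_coe.mpr hi)
      (Finset.mem_coe.mpr (Finset.mem_of_mem_erase hj)) hEq).symm)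

lemma abs_ww (m : ℕ) (i : ℕ) :
    |ww m i| = (∏ j ∈ (ss m).erase i, |vv m i - vv m j|)⁻¹ := by
  rw [ww, Lagrange.nodalWeight, Finset.abs_prod, ← Finset.prod_inv_distrib]
  exact Finset.prod_congr rfl fun j _ => by rw [abs_inv]

lemma abs_ratio (m : ℕ) {i : ℕ} (hi : i ∈ ss m) (h0 : (0:ℕ) ∈ ss m) :
    |ww m i / ww m 0| = (∏ j ∈ (ss m).erase 0, |vv m 0 - vv m j|)
      / ∏ j ∈ (ss m).erase i, |vv m i - vv m j| := by
  rw [abs_div, abs_ww, abs_ww]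
  rw [div_eq_mul_inv, inv_inv, mul_comm, ← div_eq_mul_inv]

lemma erase0 (m : ℕ) : (ss m).erase 0 = insert (m+1) (Finset.Icc 1 m) :=
  Finset.erase_insert (hnot0 m)

lemma erase1 (m : ℕ) : (ss m).erase (m+1) = insert 0 (Finset.Icc 1 m) := by
  ext x; simp only [ss, Finset.mem_erase, Finset.mem_insert, Finset.mem_Icc]; omega

lemma erasek {m k : ℕ} (h1 : 1 ≤ k) (h2 : k ≤ m) :
    (ss m).erase k = insert 0 (insert (m+1) ((Finset.Icc 1 m).erase k)) := by
  ext x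
  simp only [ss, Finset.mem_erase, Finset.mem_insert, Finset.mem_Icc]
  omega

lemma W0val (m : ℕ) :
    (∏ j ∈ (ss m).erase 0, |vv m 0 - vv m j|) = 2 * ∏ k ∈ Finset.Icc 1 m, (k:ℝ)^2 := by
  rw [erase0, Finset.prod_insert (hnot1 m)]
  have hv0 : vv m 0 = 0 := by simp [vv, ee0]
  have hv1 : vv m (m+1) = 2 := by simp [vv, ee1]
  rw [hv0, hv1]
  norm_num
  exact Finset.prod_congr rfl fun k hk => by
    simp only [Finset.mem_Icc] at hk
    rw [vv, eek hk.1 hk.2]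
    push_cast
    simp [abs_of_nonneg (by positivity : (0:ℝ) ≤ (k:ℝ)^2)]

lemma W1val (m : ℕ) :
    (∏ j ∈ (ss m).erase (m+1), |vv m (m+1) - vv m j|)
      = 2 * ∏ k ∈ Finset.Icc 1 m, |(k:ℝ)^2 - 2| := by
  rw [erase1, Finset.prod_insert (by simp : (0:ℕ) ∉ Finset.Icc 1 m)]
  have hv0 : vv m 0 = 0 := by simp [vv, ee0]
  have hv1 : vv m (m+1) = 2 := by simp [vv, ee1]
  rw [hv0, hv1]
  norm_num
  exact Finset.prod_congr rfl fun k hk => by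
    simp only [Finset.mem_Icc] at hk
    rw [vv, eek hk.1 hk.2]
    push_cast
    rw [abs_sub_comm]

lemma Wkval {m k : ℕ} (h1 : 1 ≤ k) (h2 : k ≤ m) :
    (∏ j ∈ (ss m).erase k, |vv m k - vv m j|)
      = (k:ℝ)^2 * (|(k:ℝ)^2 - 2| *
          ∏ j ∈ (Finset.Icc 1 m).erase k, |(k:ℝ)^2 - (j:ℝ)^2|) := by
  rw [erasek h1 h2]
  have hn0 : (0:ℕ) ∉ insert (m+1) ((Finset.Icc 1 m).erase k) := by
    simp only [Finset.mem_insert, Finset.mem_erase, Finset.mem_Icc]; omega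
  have hn1 : m+1 ∉ (Finset.Icc 1 m).erase k := by
    simp only [Finset.mem_erase, Finset.mem_Icc]; omega
  rw [Finset.prod_insert hn0, Finset.prod_insert hn1]
  have hv0 : vv m 0 = 0 := by simp [vv, ee0]
  have hv1 : vv m (m+1) = 2 := by simp [vv, ee1]
  have hvk : vv m k = (k:ℝ)^2 := by rw [vv, eek h1 h2]; push_cast; ring
  rw [hv0, hv1, hvk, sub_zero, abs_of_nonneg (by positivity : (0:ℝ) ≤ (k:ℝ)^2)]
  congr 1
  congr 1
  refine Finset.prod_congr rfl fun j hj => ?_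
  simp only [Finset.mem_erase, Finset.mem_Icc] at hj
  rw [vv, eek hj.2.1 hj.2.2]
  push_cast
  ring_nf

lemma dbound (m : ℕ) (hm : 2 ≤ m) : |ww m (m+1) / ww m 0| ≤ 8 := by
  rw [abs_ratio m (mem1 m) (mem0 m), W0val, W1val]
  have hp : (0:ℝ) < ∏ k ∈ Finset.Icc 1 m, |(k:ℝ)^2 - 2| := by
    refine Finset.prod_pos fun k hk => ?_
    simp only [Finset.mem_Icc] at hk
    rcases Nat.lt_or_ge k 2 with h | h
    · have hk1 : k = 1 := by omega
      subst hk1; norm_num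
    · rw [absfac h]
      have : (2:ℝ) ≤ (k:ℝ) := by exact_mod_cast h
      nlinarith
  rw [div_le_iff₀ (by positivity)]
  have key := dprodbound m hm
  rw [Finset.prod_div_distrib] at key
  have key2 : (∏ k ∈ Finset.Icc 1 m, (k:ℝ)^2)
      ≤ (8*((m:ℝ)-1)/((m:ℝ)+2)) * ∏ k ∈ Finset.Icc 1 m, |(k:ℝ)^2 - 2| :=
    (div_le_iff₀ hp).mp key
  have hb : 8*((m:ℝ)-1)/((m:ℝ)+2) ≤ 8 := by
    rw [div_le_iff₀ (by positivity)]
    have : (2:ℝ) ≤ (m:ℝ) := by exact_mod_cast hm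
    nlinarith
  have key3 : (∏ k ∈ Finset.Icc 1 m, (k:ℝ)^2) ≤ 8 * ∏ k ∈ Finset.Icc 1 m, |(k:ℝ)^2 - 2| :=
    key2.trans (mul_le_mul_of_nonneg_right hb hp.le)
  linarith

lemma hkeyR {m k : ℕ} (h1 : 1 ≤ k) (h2 : k ≤ m) :
    (∏ j ∈ (Finset.Icc 1 m).erase k, (j:ℝ)^2)
      ≤ 2 * ∏ j ∈ (Finset.Icc 1 m).erase k, |(k:ℝ)^2 - (j:ℝ)^2| := by
  have hsplit2 : (Finset.Icc 1 m).erase k = Finset.Icc 1 (k-1) ∪ Finset.Icc (k+1) m := by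
    ext x
    simp only [Finset.mem_erase, Finset.mem_union, Finset.mem_Icc]
    omega
  have hdisj : Disjoint (Finset.Icc 1 (k-1)) (Finset.Icc (k+1) m) := by
    rw [Finset.disjoint_left]
    intro x hx hx'
    simp only [Finset.mem_Icc] at hx hx'
    omega
  rw [hsplit2, Finset.prod_union hdisj, Finset.prod_union hdisj]
  have A1 : ∏ j ∈ Finset.Icc 1 (k-1), |(k:ℝ)^2 - (j:ℝ)^2|
      = ((∏ j ∈ Finset.Icc 1 (k-1), (k^2 - j^2) : ℕ) : ℝ) := by
    rw [Nat.cast_prod]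
    refine Finset.prod_congr rfl fun j hj => ?_
    simp only [Finset.mem_Icc] at hj
    have hjk : j ≤ k := by omega
    have hsq : j^2 ≤ k^2 := Nat.pow_le_pow_left hjk 2
    rw [Nat.cast_sub hsq]
    push_cast
    rw [abs_of_nonneg]
    have : (j:ℝ) ≤ (k:ℝ) := by exact_mod_cast hjk
    have hj0 : (0:ℝ) ≤ (j:ℝ) := by positivity
    nlinarith
  have A2 : ∏ j ∈ Finset.Icc (k+1) m, |(k:ℝ)^2 - (j:ℝ)^2|
      = ((∏ j ∈ Finset.Icc (k+1) m, (j^2 - k^2) : ℕ) : ℝ) := by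
    rw [Nat.cast_prod]
    refine Finset.prod_congr rfl fun j hj => ?_
    simp only [Finset.mem_Icc] at hj
    have hjk : k ≤ j := by omega
    have hsq : k^2 ≤ j^2 := Nat.pow_le_pow_left hjk 2
    rw [Nat.cast_sub hsq]
    push_cast
    rw [abs_sub_comm, abs_of_nonneg]
    have : (k:ℝ) ≤ (j:ℝ) := by exact_mod_cast hjk
    have hk0 : (0:ℝ) ≤ (k:ℝ) := by positivity
    nlinarith
  have B : (∏ j ∈ Finset.Icc 1 (k-1), (j:ℝ)^2) * ∏ j ∈ Finset.Icc (k+1) m, (j:ℝ)^2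
      = ((((∏ j ∈ Finset.Icc 1 (k-1), j) * ∏ j ∈ Finset.Icc (k+1) m, j)^2 : ℕ) : ℝ) := by
    push_cast
    rw [mul_pow, ← Finset.prod_pow, ← Finset.prod_pow]
  rw [A1, A2, B]
  have hnat := natkey h1 h2
  calc ((((∏ j ∈ Finset.Icc 1 (k-1), j) * ∏ j ∈ Finset.Icc (k+1) m, j)^2 : ℕ) : ℝ)
      ≤ ((2 * ((∏ j ∈ Finset.Icc 1 (k-1), (k^2 - j^2)) * ∏ j ∈ Finset.Icc (k+1) m, (j^2 - k^2)) : ℕ) : ℝ) := by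
        exact_mod_cast hnat
    _ = 2 * (((∏ j ∈ Finset.Icc 1 (k-1), (k^2 - j^2) : ℕ) : ℝ) * ((∏ j ∈ Finset.Icc (k+1) m, (j^2 - k^2) : ℕ) : ℝ)) := by
        push_cast
        ring

lemma cbound {m k : ℕ} (hm : 2 ≤ m) (h1 : 1 ≤ k) (h2 : k ≤ m) :
    |ww m k / ww m 0| ≤ 4 / |(k:ℝ)^2 - 2| := by
  have habs2 : (0:ℝ) < |(k:ℝ)^2 - 2| := by
    rcases Nat.lt_or_ge k 2 with h | h
    · have hk1 : k = 1 := by omega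
      subst hk1; norm_num
    · rw [absfac h]
      have : (2:ℝ) ≤ (k:ℝ) := by exact_mod_cast h
      nlinarith
  rw [abs_ratio m (memk (Finset.mem_Icc.mpr ⟨h1, h2⟩)) (mem0 m), W0val, Wkval h1 h2]
  have hWk : (0:ℝ) < (k:ℝ)^2 * (|(k:ℝ)^2 - 2| *
      ∏ j ∈ (Finset.Icc 1 m).erase k, |(k:ℝ)^2 - (j:ℝ)^2|) := by
    rw [← Wkval h1 h2]
    exact Wpos m (memk (Finset.mem_Icc.mpr ⟨h1, h2⟩))
  rw [div_le_div_iff₀ hWk habs2]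
  have hsplit : ∏ j ∈ Finset.Icc 1 m, (j:ℝ)^2
      = (k:ℝ)^2 * ∏ j ∈ (Finset.Icc 1 m).erase k, (j:ℝ)^2 :=
    (Finset.mul_prod_erase _ _ (Finset.mem_Icc.mpr ⟨h1, h2⟩)).symm
  rw [hsplit]
  have hkey := hkeyR h1 h2
  have hk2 : (0:ℝ) ≤ (k:ℝ)^2 := by positivity
  have hmono := mul_le_mul_of_nonneg_left hkey (mul_nonneg hk2 habs2.le)
  nlinarith [hmono]

end Stmt19aux

open Stmt19aux in
theorem stmt19 (m : ℕ) (hm : 2 ≤ m) :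
    ∃ d : ℝ, ∃ c : ℕ → ℝ,
      |d| ≤ 8 ∧
      (∀ k ∈ Finset.Icc 1 m, |c k| ≤ 4 / |(k : ℝ) ^ 2 - 2|) ∧
      (X - 1) ^ (m + 1) ∣
        (1 + C d * X ^ 2 + ∑ k ∈ Finset.Icc 1 m, C (c k) * X ^ (k ^ 2) : Polynomial ℝ) := by
  have hw0 : ww m 0 ≠ 0 := Lagrange.nodalWeight_ne_zero (ee_injOn m) (mem0 m)
  refine ⟨ww m (m+1) / ww m 0, fun k => ww m k / ww m 0, dbound m hm, ?_, ?_⟩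
  · intro k hk
    simp only [Finset.mem_Icc] at hk
    exact cbound hm hk.1 hk.2
  · have hG : (1 + C (ww m (m+1) / ww m 0) * X ^ 2
        + ∑ k ∈ Finset.Icc 1 m, C (ww m k / ww m 0) * X ^ (k ^ 2) : Polynomial ℝ)
        = C (ww m 0)⁻¹ * ∑ i ∈ ss m, C (ww m i) * X ^ (ee m i) := by
      rw [ss, Finset.sum_insert (hnot0 m), Finset.sum_insert (hnot1 m), ee0, ee1]
      rw [mul_add, mul_add, ← mul_assoc, ← mul_assoc, ← C_mul, ← C_mul,
        inv_mul_cancel₀ hw0, C_1, one_mul, pow_zero, Finset.mul_sum, add_assoc]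
      rw [div_eq_inv_mul (ww m (m+1)) (ww m 0)]
      congr 1
      congr 1
      refine Finset.sum_congr rfl fun k hk => ?_
      simp only [Finset.mem_Icc] at hk
      rw [eek hk.1 hk.2, ← mul_assoc, ← C_mul, div_eq_inv_mul]
    rw [hG]
    exact Dvd.dvd.mul_left (dvdG m) _
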